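/- Let E be a finite-dimensional real inner product space, let f : E → ℝ be twice continuously differentiable, and let γ : ℝ → E be a complete gradient flow of f whose image is bounded and which is not constant. Then the function t ↦ f(γ(t)) is strictly decreasing, and the set {f(γ(t)) : t ∈ ℝ} is a bounded open interval. -/

import Mathlib

open Set InnerProductSpace
open scoped NNReal

/-- Let `E` be a finite-dimensional real inner product space, `f : E → ℝ` be `C²`,
and `γ : ℝ → E` a non-constant complete gradient flow of `f` with bounded image.
Then `t ↦ f (γ t)` is strictly decreasing and its set of values
`{f (γ t) | t ∈ ℝ}` is a bounded open interval. -/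
theorem stmt_9 {E : Type*} [NormedAddCommGroup E] [InnerProductSpace ℝ E]
    [FiniteDimensional ℝ E]
    (f : E → ℝ) (hf : ContDiff ℝ 2 f)
    (γ : ℝ → E) (hγ : ∀ t : ℝ, HasDerivAt γ (-(gradient f (γ t))) t)
    (hbdd : Bornology.IsBounded (Set.range γ))
    (hnc : ∃ s t : ℝ, γ s ≠ γ t) :
    StrictAnti (fun t : ℝ => f (γ t)) ∧
    ∃ a b : ℝ, a < b ∧ Set.range (fun t : ℝ => f (γ t)) = Set.Ioo a b := by
  have hf1 : Differentiable ℝ f := hf.differentiable (by norm_num)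
  have hgrad : ContDiff ℝ 1 (gradient f) := by
    have h1 : ContDiff ℝ 1 (fderiv ℝ f) := hf.fderiv_right (by norm_num)
    exact ((toDual ℝ E).symm.toContinuousLinearEquiv.toContinuousLinearMap.contDiff).comp h1
  -- the derivative of f ∘ γ
  have hderiv : ∀ t : ℝ, HasDerivAt (fun t => f (γ t)) (-‖gradient f (γ t)‖ ^ 2) t := by
    intro t
    have hF : HasFDerivAt f (fderiv ℝ f (γ t)) (γ t) := (hf1 (γ t)).hasFDerivAt
    have h := hF.comp_hasDerivAt t (hγ t)
    convert h using 1
    any_goals rfl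
    have hfd : fderiv ℝ f (γ t) = toDual ℝ E (gradient f (γ t)) :=
      ((toDual ℝ E).apply_symm_apply _).symm
    rw [hfd]
    simp [toDual_apply_apply, inner_neg_right, real_inner_self_eq_norm_sq]
    rw [hfd, toDual_apply_apply, real_inner_self_eq_norm_sq]
  -- the gradient never vanishes along γ
  have hne : ∀ t : ℝ, gradient f (γ t) ≠ 0 := by
    intro t₀ h0
    obtain ⟨s, t, hst⟩ := hnc
    -- pick u with γ u ≠ γ t₀
    obtain ⟨u, hu⟩ : ∃ u : ℝ, γ u ≠ γ t₀ := by
      by_contra hcon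
      push_neg at hcon
      exact hst ((hcon s).trans (hcon t).symm)
    obtain ⟨R, hR⟩ := hbdd.subset_closedBall 0
    set S := Metric.closedBall (0 : E) R with hS
    have hSc : IsCompact S := isCompact_closedBall 0 R
    have hconv : Convex ℝ S := convex_closedBall 0 R
    obtain ⟨C, hC⟩ := hSc.exists_bound_of_continuousOn
      ((hgrad.continuous_fderiv one_ne_zero).continuousOn (s := S))
    set C' : ℝ≥0 := Real.toNNReal C with hC'
    have hlip : LipschitzOnWith C' (gradient f) S := by
      apply hconv.lipschitzOnWith_of_nnnorm_fderiv_le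
        (fun x _ => (hgrad.differentiable one_ne_zero x))
      intro x hx
      have h1 : ‖fderiv ℝ (gradient f) x‖ ≤ C := hC x hx
      have : ‖fderiv ℝ (gradient f) x‖ ≤ (C' : ℝ) :=
        h1.trans (Real.le_coe_toNNReal C)
      exact_mod_cast this
    have hlipneg : ∀ τ : ℝ, LipschitzOnWith C' (fun x => -(gradient f x)) S := by
      intro τ
      intro x hx y hy
      simpa [edist_neg_neg] using hlip hx hy
    set a : ℝ := min u t₀ - 1
    set b : ℝ := max u t₀ + 1
    have ht₀ : t₀ ∈ Ioo a b :=
      ⟨by simp [a, b]; nlinarith [min_le_right u t₀], by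
        have := le_max_right u t₀; simp only [a, b]; linarith⟩
    have hu' : u ∈ Ioo a b :=
      ⟨by have := min_le_left u t₀; simp only [a, b]; linarith, by
        have := le_max_left u t₀; simp only [a, b]; linarith⟩
    have key : EqOn γ (fun _ => γ t₀) (Ioo a b) := by
      apply ODE_solution_unique_of_mem_Ioo
        (v := fun _ x => -(gradient f x)) (s := fun _ => S) (fun τ _ => hlipneg τ) ht₀
      · intro τ _
        exact ⟨hγ τ, hR (mem_range_self τ)⟩
      · intro τ _
        refine ⟨?_, hR (mem_range_self t₀)⟩
        have : (0 : E) = -(gradient f (γ t₀)) := by rw [h0, neg_zero]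
        exact this ▸ hasDerivAt_const τ (γ t₀)
      · rfl
    exact hu (key hu')
  -- strict antitonicity
  have hanti : StrictAnti (fun t : ℝ => f (γ t)) := by
    apply strictAnti_of_deriv_neg
    intro t
    rw [(hderiv t).deriv]
    have := hne t
    have hpos : 0 < ‖gradient f (γ t)‖ := norm_pos_iff.mpr this
    nlinarith
  refine ⟨hanti, ?_⟩
  set g : ℝ → ℝ := fun t => f (γ t) with hgdef
  have hcontγ : Continuous γ := continuous_iff_continuousAt.mpr fun t => (hγ t).continuousAt
  have hcontg : Continuous g := hf.continuous.comp hcontγ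
  -- boundedness of the range of g
  obtain ⟨R, hR⟩ := hbdd.subset_closedBall 0
  have hsub : Set.range g ⊆ f '' Metric.closedBall (0 : E) R := by
    rintro y ⟨t, rfl⟩
    exact ⟨γ t, hR (Set.mem_range_self t), rfl⟩
  have hcompact : IsCompact (f '' Metric.closedBall (0 : E) R) :=
    (isCompact_closedBall 0 R).image hf.continuous
  have hbddA : BddAbove (Set.range g) := hcompact.bddAbove.mono hsub
  have hbddB : BddBelow (Set.range g) := hcompact.bddBelow.mono hsub
  have hnonempty : (Set.range g).Nonempty := ⟨g 0, Set.mem_range_self 0⟩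
  set a : ℝ := sInf (Set.range g) with ha
  set b : ℝ := sSup (Set.range g) with hb
  have hab : a < b := by
    have h1 : a ≤ g 1 := csInf_le hbddB (Set.mem_range_self 1)
    have h2 : g 0 ≤ b := le_csSup hbddA (Set.mem_range_self 0)
    have h3 : g 1 < g 0 := hanti zero_lt_one
    linarith
  refine ⟨a, b, hab, ?_⟩
  have hord : (Set.range g).OrdConnected :=
    (isPreconnected_range hcontg).ordConnected
  ext y
  constructor
  · rintro ⟨t, rfl⟩
    constructor
    · have h1 : a ≤ g (t + 1) := csInf_le hbddB (Set.mem_range_self _)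
      have h2 : g (t + 1) < g t := hanti (lt_add_one t)
      linarith
    · have h1 : g (t - 1) ≤ b := le_csSup hbddA (Set.mem_range_self _)
      have h2 : g t < g (t - 1) := hanti (sub_one_lt t)
      linarith
  · rintro ⟨hy1, hy2⟩
    obtain ⟨z, hz, hzy⟩ := exists_lt_of_csInf_lt hnonempty hy1
    obtain ⟨w, hw, hyw⟩ := exists_lt_of_lt_csSup hnonempty hy2
    exact hord.out hz hw ⟨hzy.le, hyw.le⟩
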